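/- Let P_l be the path on l ≥ 2 vertices and C_m the cycle on m ≥ 3 vertices. Then the forgotten topological index of their subdivision vertex join satisfies F(P_l ∔ C_m) = 8l − 14 + 8m + 12m(l − 1) + (l − 1)(2 + m)³ + 6m(l − 1)² + m(l − 1)³. -/

import Mathlib

open Finset

/-- The subdivision graph `S(G)`: one new vertex inserted on every edge of `G`. -/
def subdivisionGraph {V₁ : Type*} (G : SimpleGraph V₁) : SimpleGraph (V₁ ⊕ G.edgeSet) where
  Adj x y :=
    match x, y with
    | Sum.inl u, Sum.inr e => u ∈ (e : Sym2 V₁)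
    | Sum.inr e, Sum.inl u => u ∈ (e : Sym2 V₁)
    | _, _ => False
  symm := by
    constructor
    rintro (u | e) (v | f) h
    · exact h.elim
    · exact h
    · exact h
    · exact h.elim
  loopless := by constructor; rintro (u | e) h <;> exact h

instance subdivisionGraph.adjDecidable {V₁ : Type*} (G : SimpleGraph V₁) [DecidableEq V₁] :
    DecidableRel (subdivisionGraph G).Adj
  | Sum.inl u, Sum.inr e => inferInstanceAs (Decidable (u ∈ (e : Sym2 V₁)))
  | Sum.inr e, Sum.inl u => inferInstanceAs (Decidable (u ∈ (e : Sym2 V₁)))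
  | Sum.inl _, Sum.inl _ => inferInstanceAs (Decidable False)
  | Sum.inr _, Sum.inr _ => inferInstanceAs (Decidable False)

/-- The subdivision vertex join `G₁ ∔ G₂`: the disjoint union of `S(G₁)` and `G₂`,
with every subdivision (new) vertex of `S(G₁)` joined to every vertex of `G₂`. -/
def subdivisionVertexJoin {V₁ V₂ : Type*} (G₁ : SimpleGraph V₁) (G₂ : SimpleGraph V₂) :
    SimpleGraph (V₁ ⊕ G₁.edgeSet ⊕ V₂) where
  Adj x y :=
    match x, y with
    | Sum.inl u, Sum.inr (Sum.inl e) => u ∈ (e : Sym2 V₁)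
    | Sum.inr (Sum.inl e), Sum.inl u => u ∈ (e : Sym2 V₁)
    | Sum.inr (Sum.inl _), Sum.inr (Sum.inr _) => True
    | Sum.inr (Sum.inr _), Sum.inr (Sum.inl _) => True
    | Sum.inr (Sum.inr u), Sum.inr (Sum.inr v) => G₂.Adj u v
    | _, _ => False
  symm := by
    constructor
    rintro (u | e | u) (v | f | v) h <;> first | exact h.elim | exact h | trivial | exact h.symm
  loopless := by
    constructor
    rintro (u | e | u) h
    · exact h
    · exact h
    · exact G₂.loopless.irrefl u h

instance subdivisionVertexJoin.adjDecidable {V₁ V₂ : Type*} (G₁ : SimpleGraph V₁)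
    (G₂ : SimpleGraph V₂) [DecidableEq V₁] [DecidableRel G₂.Adj] :
    DecidableRel (subdivisionVertexJoin G₁ G₂).Adj
  | Sum.inl u, Sum.inr (Sum.inl e) => inferInstanceAs (Decidable (u ∈ (e : Sym2 V₁)))
  | Sum.inr (Sum.inl e), Sum.inl u => inferInstanceAs (Decidable (u ∈ (e : Sym2 V₁)))
  | Sum.inr (Sum.inl _), Sum.inr (Sum.inr _) => inferInstanceAs (Decidable True)
  | Sum.inr (Sum.inr _), Sum.inr (Sum.inl _) => inferInstanceAs (Decidable True)
  | Sum.inr (Sum.inr u), Sum.inr (Sum.inr v) => inferInstanceAs (Decidable (G₂.Adj u v))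
  | Sum.inl _, Sum.inl _ => inferInstanceAs (Decidable False)
  | Sum.inl _, Sum.inr (Sum.inr _) => inferInstanceAs (Decidable False)
  | Sum.inr (Sum.inr _), Sum.inl _ => inferInstanceAs (Decidable False)
  | Sum.inr (Sum.inl _), Sum.inr (Sum.inl _) => inferInstanceAs (Decidable False)

/-- First Zagreb index `M₁(G) = ∑ v, d(v)²`. -/
def firstZagreb {V : Type*} [Fintype V] (G : SimpleGraph V) [DecidableRel G.Adj] : ℤ :=
  ∑ v, (G.degree v : ℤ) ^ 2

/-- Forgotten topological index `F(G) = ∑ v, d(v)³`. -/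
def forgottenIndex {V : Type*} [Fintype V] (G : SimpleGraph V) [DecidableRel G.Adj] : ℤ :=
  ∑ v, (G.degree v : ℤ) ^ 3

/-- First hyper Zagreb index `HM₁(G) = ∑_{uv ∈ E(G)} (d(u) + d(v))²`. -/
def hyperZagreb {V : Type*} [Fintype V] [DecidableEq V] (G : SimpleGraph V)
    [DecidableRel G.Adj] : ℤ :=
  ∑ e ∈ G.edgeFinset,
    Sym2.lift ⟨fun u v => ((G.degree u : ℤ) + (G.degree v : ℤ)) ^ 2, fun _ _ => by ring⟩ e

/-- Reduced second Zagreb index `RM₂(G) = ∑_{uv ∈ E(G)} (d(u) - 1)(d(v) - 1)`. -/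
def reducedSecondZagreb {V : Type*} [Fintype V] [DecidableEq V] (G : SimpleGraph V)
    [DecidableRel G.Adj] : ℤ :=
  ∑ e ∈ G.edgeFinset,
    Sym2.lift ⟨fun u v => ((G.degree u : ℤ) - 1) * ((G.degree v : ℤ) - 1), fun _ _ => by ring⟩ e

instance pathGraph.adjDecidable (n : ℕ) : DecidableRel (SimpleGraph.pathGraph n).Adj :=
  fun u v => decidable_of_iff (u.val + 1 = v.val ∨ v.val + 1 = u.val)
    SimpleGraph.pathGraph_adj.symm


section Degrees

variable {V₁ V₂ : Type*} [Fintype V₁] [Fintype V₂] [DecidableEq V₁]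
  (G₁ : SimpleGraph V₁) (G₂ : SimpleGraph V₂) [DecidableRel G₁.Adj] [DecidableRel G₂.Adj]

lemma degree_svj_inl (u : V₁) :
    (subdivisionVertexJoin G₁ G₂).degree (Sum.inl u) = G₁.degree u := by
  classical
  rw [← SimpleGraph.card_neighborSet_eq_degree, ← G₁.card_incidenceSet_eq_degree]
  apply Fintype.card_congr
  refine ⟨fun x => ?_, fun s => ?_, ?_, ?_⟩
  · rcases x with ⟨(v | e | v), h⟩
    · exact absurd h (by simp [subdivisionVertexJoin])
    · exact ⟨e, e.2, h⟩
    · exact absurd h (by simp [subdivisionVertexJoin])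
  · exact ⟨Sum.inr (Sum.inl ⟨s.1, s.2.1⟩), s.2.2⟩
  · rintro ⟨(v | e | v), h⟩
    · exact absurd h (by simp [subdivisionVertexJoin])
    · rfl
    · exact absurd h (by simp [subdivisionVertexJoin])
  · rintro ⟨s, hs⟩; rfl

lemma card_sym2_mem (e : G₁.edgeSet) :
    Fintype.card {u : V₁ // u ∈ (e : Sym2 V₁)} = 2 := by
  obtain ⟨e, he⟩ := e
  induction e with
  | _ a b =>
    have hab : a ≠ b := G₁.ne_of_adj he
    rw [Fintype.card_subtype]
    have h2 : ({u : V₁ | u ∈ (s(a,b) : Sym2 V₁)} : Finset V₁) = {a, b} := by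
      ext u; simp [Sym2.mem_iff]
    rw [show (Finset.filter (fun u => u ∈ ((⟨s(a,b), he⟩ : G₁.edgeSet) : Sym2 V₁)) Finset.univ)
        = ({u : V₁ | u ∈ (s(a,b) : Sym2 V₁)} : Finset V₁) from rfl, h2, Finset.card_pair hab]

lemma degree_svj_sub (e : G₁.edgeSet) :
    (subdivisionVertexJoin G₁ G₂).degree (Sum.inr (Sum.inl e)) = 2 + Fintype.card V₂ := by
  classical
  rw [← SimpleGraph.card_neighborSet_eq_degree, ← card_sym2_mem G₁ e, ← Fintype.card_sum]
  apply Fintype.card_congr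
  refine ⟨fun x => ?_, fun s => ?_, ?_, ?_⟩
  · rcases x with ⟨(v | f | v), h⟩
    · exact Sum.inl ⟨v, h⟩
    · exact absurd h (by simp [subdivisionVertexJoin])
    · exact Sum.inr v
  · rcases s with ⟨v, hv⟩ | v
    · exact ⟨Sum.inl v, hv⟩
    · exact ⟨Sum.inr (Sum.inr v), trivial⟩
  · rintro ⟨(v | f | v), h⟩
    · rfl
    · exact absurd h (by simp [subdivisionVertexJoin])
    · rfl
  · rintro (⟨v, hv⟩ | v) <;> rfl

lemma degree_svj_inr (v : V₂) :
    (subdivisionVertexJoin G₁ G₂).degree (Sum.inr (Sum.inr v)) =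
      Fintype.card G₁.edgeSet + G₂.degree v := by
  classical
  rw [← SimpleGraph.card_neighborSet_eq_degree, ← SimpleGraph.card_neighborSet_eq_degree,
    ← Fintype.card_sum]
  apply Fintype.card_congr
  refine ⟨fun x => ?_, fun s => ?_, ?_, ?_⟩
  · rcases x with ⟨(u | e | w), h⟩
    · exact absurd h (by simp [subdivisionVertexJoin])
    · exact Sum.inl e
    · exact Sum.inr ⟨w, h⟩
  · rcases s with e | ⟨w, hw⟩
    · exact ⟨Sum.inr (Sum.inl e), trivial⟩
    · exact ⟨Sum.inr (Sum.inr w), hw⟩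
  · rintro ⟨(u | e | w), h⟩
    · exact absurd h (by simp [subdivisionVertexJoin])
    · rfl
    · rfl
  · rintro (e | ⟨w, hw⟩) <;> rfl

end Degrees

lemma pathGraph_degree (l : ℕ) (u : Fin l) :
    (SimpleGraph.pathGraph l).degree u =
      (if u.val + 1 < l then 1 else 0) + (if 0 < u.val then 1 else 0) := by
  classical
  rw [SimpleGraph.degree]
  have h1 : (SimpleGraph.pathGraph l).neighborFinset u =
      Finset.univ.filter (fun v : Fin l => v.val = u.val + 1) ∪
      Finset.univ.filter (fun v : Fin l => v.val + 1 = u.val) := by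
    ext v
    simp [SimpleGraph.pathGraph_adj, eq_comm, or_comm]
  rw [h1, Finset.card_union_of_disjoint]
  · congr 1
    · rcases lt_or_ge (u.val + 1) l with h | h
      · rw [if_pos h]
        rw [show Finset.univ.filter (fun v : Fin l => v.val = u.val + 1) = {⟨u.val+1, h⟩} by
          ext v; simp [Fin.ext_iff]]
        simp
      · rw [if_neg (by omega)]
        rw [Finset.card_eq_zero, Finset.filter_eq_empty_iff]
        intro v _; omega
    · rcases Nat.eq_zero_or_pos u.val with h | h
      · rw [if_neg (by omega)]
        rw [Finset.card_eq_zero, Finset.filter_eq_empty_iff]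
        intro v _; omega
      · rw [if_pos h]
        rw [show Finset.univ.filter (fun v : Fin l => v.val + 1 = u.val) = {⟨u.val-1, by omega⟩} by
          ext v; simp [Fin.ext_iff]; omega]
        simp
  · rw [Finset.disjoint_filter]
    intro v _ h1 h2; omega

lemma count_aux (l : ℕ) (p : ℕ → Prop) [DecidablePred p] :
    ∑ u : Fin l, (if p u.val then (1:ℤ) else 0) = #((Finset.range l).filter p) := by
  rw [Fin.sum_univ_eq_sum_range (fun i => if p i then (1:ℤ) else 0) l, Finset.sum_boole]

lemma pathGraph_cube_sum (l : ℕ) (hl : 2 ≤ l) :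
    ∑ u : Fin l, ((SimpleGraph.pathGraph l).degree u : ℤ) ^ 3 = 8 * l - 14 := by
  have key : ∀ u : Fin l, ((SimpleGraph.pathGraph l).degree u : ℤ) ^ 3 =
      (if u.val + 1 < l then (1:ℤ) else 0) + (if 0 < u.val then (1:ℤ) else 0) +
      6 * (if 0 < u.val ∧ u.val + 1 < l then (1:ℤ) else 0) := by
    intro u
    obtain ⟨k, hk⟩ := u
    rw [pathGraph_degree]
    simp only [Fin.val_mk]
    by_cases h1 : k + 1 < l <;> by_cases h2 : 0 < k <;> simp [h1, h2] <;> norm_num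
  rw [Finset.sum_congr rfl (fun u _ => key u), Finset.sum_add_distrib, Finset.sum_add_distrib,
    ← Finset.mul_sum, count_aux l (fun i => i + 1 < l), count_aux l (fun i => 0 < i),
    count_aux l (fun i => 0 < i ∧ i + 1 < l)]
  have e1 : (Finset.range l).filter (fun i => i + 1 < l) = Finset.range (l-1) := by
    ext i; simp; omega
  have e2 : (Finset.range l).filter (fun i => 0 < i) = Finset.Ico 1 l := by
    ext i; simp; omega
  have e3 : (Finset.range l).filter (fun i => 0 < i ∧ i + 1 < l) = Finset.Ico 1 (l-1) := by
    ext i; simp; omega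
  rw [e1, e2, e3, Finset.card_range, Nat.card_Ico, Nat.card_Ico]
  omega

lemma pathGraph_deg_sum (l : ℕ) (hl : 2 ≤ l) :
    ∑ u : Fin l, (SimpleGraph.pathGraph l).degree u = 2 * (l - 1) := by
  have : (∑ u : Fin l, ((SimpleGraph.pathGraph l).degree u : ℤ)) = 2 * ((l:ℤ) - 1) := by
    have key : ∀ u : Fin l, ((SimpleGraph.pathGraph l).degree u : ℤ) =
        (if u.val + 1 < l then (1:ℤ) else 0) + (if 0 < u.val then (1:ℤ) else 0) := by
      intro u; rw [pathGraph_degree]; split_ifs <;> push_cast <;> ring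
    rw [Finset.sum_congr rfl (fun u _ => key u), Finset.sum_add_distrib,
      count_aux l (fun i => i + 1 < l), count_aux l (fun i => 0 < i)]
    have e1 : (Finset.range l).filter (fun i => i + 1 < l) = Finset.range (l-1) := by
      ext i; simp; omega
    have e2 : (Finset.range l).filter (fun i => 0 < i) = Finset.Ico 1 l := by
      ext i; simp; omega
    rw [e1, e2, Finset.card_range, Nat.card_Ico]
    omega
  rw [← Nat.cast_sum] at this
  omega

lemma pathGraph_edge_card (l : ℕ) (hl : 2 ≤ l) :
    Fintype.card (SimpleGraph.pathGraph l).edgeSet = l - 1 := by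
  classical
  have h := (SimpleGraph.pathGraph l).sum_degrees_eq_twice_card_edges
  rw [pathGraph_deg_sum l hl] at h
  have : #(SimpleGraph.pathGraph l).edgeFinset = l - 1 := by omega
  rw [← this, SimpleGraph.edgeFinset, Set.toFinset_card]

theorem forgottenIndex_subdivisionVertexJoin_path_cycle (l m : ℕ) (hl : 2 ≤ l) (hm : 3 ≤ m) :
    forgottenIndex (subdivisionVertexJoin (SimpleGraph.pathGraph l) (SimpleGraph.cycleGraph m))
      = 8 * l - 14 + 8 * m + 12 * m * ((l : ℤ) - 1) + ((l : ℤ) - 1) * (2 + (m : ℤ)) ^ 3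
        + 6 * m * ((l : ℤ) - 1) ^ 2 + m * ((l : ℤ) - 1) ^ 3 := by
  obtain ⟨k, rfl⟩ : ∃ k, m = k + 3 := ⟨m - 3, by omega⟩
  unfold forgottenIndex
  rw [Fintype.sum_sum_type, Fintype.sum_sum_type]
  simp only [degree_svj_inl, degree_svj_sub, degree_svj_inr]
  rw [pathGraph_cube_sum l hl]
  simp only [SimpleGraph.cycleGraph_degree_three_le, pathGraph_edge_card l hl,
    Finset.sum_const, Finset.card_univ, Fintype.card_fin, pathGraph_edge_card l hl]
  rw [nsmul_eq_mul, nsmul_eq_mul]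
  push_cast [Nat.cast_sub (show 1 ≤ l by omega)]
  ring
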